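/- Every admissible set of natural numbers with cardinality 341,640 has diameter (maximum element minus minimum element) at least 1,751,112. -/

import Mathlib

set_option maxHeartbeats 1000000


def IsAdmissible (H : Finset ℕ) : Prop :=
  ∀ p : ℕ, p.Prime → (H.image (fun n => n % p)).card < p


lemma crt_30030 (a b : ℕ) (h2 : a % 2 = b % 2) (h3 : a % 3 = b % 3)
    (h5 : a % 5 = b % 5) (h7 : a % 7 = b % 7) (h11 : a % 11 = b % 11)
    (h13 : a % 13 = b % 13) : a % 30030 = b % 30030 := by
  have e6 : a ≡ b [MOD 2 * 3] :=
    (Nat.modEq_and_modEq_iff_modEq_mul (by norm_num)).1 ⟨h2, h3⟩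
  have e30 : a ≡ b [MOD 2 * 3 * 5] :=
    (Nat.modEq_and_modEq_iff_modEq_mul (by norm_num)).1 ⟨e6, h5⟩
  have e210 : a ≡ b [MOD 2 * 3 * 5 * 7] :=
    (Nat.modEq_and_modEq_iff_modEq_mul (by norm_num)).1 ⟨e30, h7⟩
  have e2310 : a ≡ b [MOD 2 * 3 * 5 * 7 * 11] :=
    (Nat.modEq_and_modEq_iff_modEq_mul (by norm_num)).1 ⟨e210, h11⟩
  have e : a ≡ b [MOD 2 * 3 * 5 * 7 * 11 * 13] :=
    (Nat.modEq_and_modEq_iff_modEq_mul (by norm_num)).1 ⟨e2310, h13⟩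
  exact e

theorem admissible_diameter_lower_bound_341640 (H : Finset ℕ) (hne : H.Nonempty)
    (hcard : H.card = 341640) (hH : IsAdmissible H) :
    1751112 ≤ H.max' hne - H.min' hne := by
  by_contra hlt
  push_neg at hlt
  set m := H.min' hne with hm
  have hdiam : ∀ n ∈ H, n - m ≤ 1751111 := by
    intro n hn
    have h1 : n ≤ H.max' hne := Finset.le_max' H n hn
    have h2 : m ≤ n := Finset.min'_le H n hn
    have h3 : m ≤ H.max' hne := (Finset.min'_le H _ (H.max'_mem hne))
    omega
  have key : H.card ≤ ((Finset.range 59) ×ˢ (H.image (· % 2)) ×ˢ (H.image (· % 3)) ×ˢ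
      (H.image (· % 5)) ×ˢ (H.image (· % 7)) ×ˢ (H.image (· % 11)) ×ˢ
      (H.image (· % 13))).card := by
    apply Finset.card_le_card_of_injOn
      (fun n => ((n - m) / 30030, n % 2, n % 3, n % 5, n % 7, n % 11, n % 13))
    · intro n hn
      refine Finset.mem_coe.mpr ?_
      simp only [Finset.mem_product, Finset.mem_range, Finset.mem_image]
      refine ⟨?_, ⟨n, hn, rfl⟩, ⟨n, hn, rfl⟩, ⟨n, hn, rfl⟩, ⟨n, hn, rfl⟩,
        ⟨n, hn, rfl⟩, ⟨n, hn, rfl⟩⟩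
      have := hdiam n hn
      omega
    · intro a ha b hb hab
      simp only [Prod.mk.injEq] at hab
      have hda := hdiam a ha
      have hdb := hdiam b hb
      have hma : m ≤ a := Finset.min'_le H a ha
      have hmb : m ≤ b := Finset.min'_le H b hb
      obtain ⟨hq, e2, e3, e5, e7, e11, e13⟩ := hab
      have h30 := crt_30030 a b e2 e3 e5 e7 e11 e13
      clear ha hb hdiam hH e2 e3 e5 e7 e11 e13 hm hlt hcard
      omega
  have h2 : (H.image (· % 2)).card ≤ 1 := by have := hH 2 (by norm_num); omega
  have h3 : (H.image (· % 3)).card ≤ 2 := by have := hH 3 (by norm_num); omega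
  have h5 : (H.image (· % 5)).card ≤ 4 := by have := hH 5 (by norm_num); omega
  have h7 : (H.image (· % 7)).card ≤ 6 := by have := hH 7 (by norm_num); omega
  have h11 : (H.image (· % 11)).card ≤ 10 := by have := hH 11 (by norm_num); omega
  have h13 : (H.image (· % 13)).card ≤ 12 := by have := hH 13 (by norm_num); omega
  simp only [Finset.card_product, Finset.card_range] at key
  have hb : 59 * ((H.image (· % 2)).card * ((H.image (· % 3)).card *
      ((H.image (· % 5)).card * ((H.image (· % 7)).card *
      ((H.image (· % 11)).card * (H.image (· % 13)).card))))) ≤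
      59 * (1 * (2 * (4 * (6 * (10 * 12))))) := by gcongr <;> assumption
  omega
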